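/- Let p ∈ (1,∞), q = p/(p−1), p* = max{p,q}. Let A ∈ ℂ^{d×d}, b, c ∈ ℂ^d, V ≥ 0 real, Λ > 0 and μ ∈ (0,1]. Suppose |⟨Aξ,σ⟩| ≤ Λ|ξ||σ| for all ξ, σ ∈ ℂ^d and Γ_p^{(A,b,c,V)}(ξ) ≥ μ(|ξ|² + V) for all ξ ∈ ℂ^d. Then |b + 𝒥_p c|² ≤ 4(1−μ)((p*−1)Λ − μ)·V. -/

import Mathlib

open scoped ComplexConjugate

/-- The ℝ-linear operator `𝒥_p ξ = (p/2)(ξ + (1 − 2/p)·conj ξ)` on `ℂ^d`. -/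
noncomputable def Jmap (p : ℝ) {d : ℕ} (ξ : EuclideanSpace ℂ (Fin d)) :
    EuclideanSpace ℂ (Fin d) :=
  WithLp.toLp 2 (fun i => (p / 2 : ℂ) * (ξ i + ((1 - 2 / p : ℝ) : ℂ) * conj (ξ i)))

/-- The Hermitian inner product `⟨x,y⟩ = ∑ x i * conj (y i)`, linear in the first variable. -/
noncomputable def hip {d : ℕ} (x y : EuclideanSpace ℂ (Fin d)) : ℂ :=
  @inner ℂ _ _ y x

/-- A matrix acting on `ℂ^d`. -/
noncomputable def mulVecE {d : ℕ} (A : Matrix (Fin d) (Fin d) ℂ)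
    (ξ : EuclideanSpace ℂ (Fin d)) : EuclideanSpace ℂ (Fin d) :=
  WithLp.toLp 2 (fun i => A.mulVec (fun j => ξ j) i)

/-- `Γ_p^{(A,b,c,V)}(ξ) = Re⟨Aξ, 𝒥_p ξ⟩ + Re⟨b + 𝒥_p c, ξ⟩ + V`. -/
noncomputable def Gamma (p : ℝ) {d : ℕ} (A : Matrix (Fin d) (Fin d) ℂ)
    (b c : EuclideanSpace ℂ (Fin d)) (V : ℝ) (ξ : EuclideanSpace ℂ (Fin d)) : ℝ :=
  (hip (mulVecE A ξ) (Jmap p ξ)).re + (hip (b + Jmap p c) ξ).re + V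

lemma Jmap_norm_le' {d : ℕ} (p : ℝ) (hp : 1 < p) (ξ : EuclideanSpace ℂ (Fin d)) :
    ‖Jmap p ξ‖ ≤ (p / 2 * (1 + |1 - 2 / p|)) * ‖ξ‖ := by
  set ξc : EuclideanSpace ℂ (Fin d) := WithLp.toLp 2 (fun i => conj (ξ i)) with hξc
  have hnc : ‖ξc‖ = ‖ξ‖ := by
    rw [EuclideanSpace.norm_eq, EuclideanSpace.norm_eq]
    congr 1
    exact Finset.sum_congr rfl fun i _ => by rw [hξc]; simp [RCLike.norm_conj]
  have hrepr : Jmap p ξ = ((p/2 : ℝ) : ℂ) • ξ + ((p/2 * (1 - 2/p) : ℝ) : ℂ) • ξc := by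
    ext i
    simp only [Jmap, PiLp.toLp_apply, hξc, PiLp.add_apply, PiLp.smul_apply, smul_eq_mul]
    push_cast
    ring
  rw [hrepr]
  calc ‖((p/2 : ℝ) : ℂ) • ξ + ((p/2 * (1 - 2/p) : ℝ) : ℂ) • ξc‖
      ≤ ‖((p/2 : ℝ) : ℂ) • ξ‖ + ‖((p/2 * (1 - 2/p) : ℝ) : ℂ) • ξc‖ := norm_add_le _ _
    _ = |p/2| * ‖ξ‖ + |p/2 * (1 - 2/p)| * ‖ξ‖ := by
        rw [norm_smul, norm_smul, hnc, Complex.norm_real, Complex.norm_real,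
          Real.norm_eq_abs, Real.norm_eq_abs]
    _ = (p / 2 * (1 + |1 - 2/p|)) * ‖ξ‖ := by
        rw [abs_mul, abs_of_pos (by linarith : (0:ℝ) < p/2)]
        ring

lemma coeff_le' (p q pstar : ℝ) (hp : 1 < p) (hq : q = p / (p - 1))
    (hpstar : pstar = max p q) : p / 2 * (1 + |1 - 2 / p|) ≤ pstar - 1 := by
  have hp0 : 0 < p := by linarith
  have hp1 : 0 < p - 1 := by linarith
  rcases le_or_gt 2 p with h2 | h2
  · have : |1 - 2/p| = 1 - 2/p := by
      rw [abs_of_nonneg]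
      have : 2/p ≤ 1 := by rw [div_le_one hp0]; linarith
      linarith
    rw [this]
    have hple : p ≤ pstar := hpstar ▸ le_max_left _ _
    have : p/2 * (1 + (1 - 2/p)) = p - 1 := by field_simp; ring
    linarith
  · have : |1 - 2/p| = 2/p - 1 := by
      rw [abs_of_nonpos]
      · ring
      have : 1 ≤ 2/p := by rw [le_div_iff₀ hp0]; linarith
      linarith
    rw [this]
    have hqle : q ≤ pstar := hpstar ▸ le_max_right _ _
    have hq2 : 2 ≤ q := by rw [hq, le_div_iff₀ hp1]; linarith
    have : p/2 * (1 + (2/p - 1)) = 1 := by field_simp; ring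
    linarith

theorem stmt2 (d : ℕ) (hd : 1 ≤ d) (p q pstar : ℝ) (hp : 1 < p)
    (hq : q = p / (p - 1)) (hpstar : pstar = max p q)
    (A : Matrix (Fin d) (Fin d) ℂ) (b c : EuclideanSpace ℂ (Fin d))
    (V Λ μ : ℝ) (hV : 0 ≤ V) (hΛ : 0 < Λ) (hμ0 : 0 < μ) (hμ1 : μ ≤ 1)
    (hbdd : ∀ ξ σ : EuclideanSpace ℂ (Fin d), ‖hip (mulVecE A ξ) σ‖ ≤ Λ * ‖ξ‖ * ‖σ‖)
    (hΓ : ∀ ξ : EuclideanSpace ℂ (Fin d), μ * (‖ξ‖ ^ 2 + V) ≤ Gamma p A b c V ξ) :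
    ‖b + Jmap p c‖ ^ 2 ≤ 4 * (1 - μ) * ((pstar - 1) * Λ - μ) * V := by
  set w : EuclideanSpace ℂ (Fin d) := b + Jmap p c with hw
  set K : ℝ := (pstar - 1) * Λ with hK
  have hps1 : 1 < pstar := lt_of_lt_of_le hp (hpstar ▸ le_max_left _ _)
  have hJ : ∀ ξ : EuclideanSpace ℂ (Fin d), ‖Jmap p ξ‖ ≤ (pstar - 1) * ‖ξ‖ := fun ξ =>
    le_trans (Jmap_norm_le' p hp ξ)
      (mul_le_mul_of_nonneg_right (coeff_le' p q pstar hp hq hpstar) (norm_nonneg _))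
  -- Key estimate
  have lemA : ∀ ξ : EuclideanSpace ℂ (Fin d),
      μ * ‖ξ‖ ^ 2 - K * ‖ξ‖ ^ 2 - (1 - μ) * V ≤ (hip w ξ).re := by
    intro ξ
    have h1 := hΓ ξ
    have h2 : (hip (mulVecE A ξ) (Jmap p ξ)).re ≤ K * ‖ξ‖ ^ 2 := by
      calc (hip (mulVecE A ξ) (Jmap p ξ)).re
          ≤ ‖hip (mulVecE A ξ) (Jmap p ξ)‖ := Complex.re_le_norm _
        _ ≤ Λ * ‖ξ‖ * ‖Jmap p ξ‖ := hbdd ξ _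
        _ ≤ Λ * ‖ξ‖ * ((pstar - 1) * ‖ξ‖) := by
            apply mul_le_mul_of_nonneg_left (hJ ξ)
            positivity
        _ = K * ‖ξ‖ ^ 2 := by rw [hK]; ring
    simp only [Gamma, ← hw] at h1
    linarith
  have hre : ∀ (s : ℝ) (ξ : EuclideanSpace ℂ (Fin d)),
      (hip w ((s : ℂ) • ξ)).re = s * (hip w ξ).re := by
    intro s ξ
    simp only [hip, inner_smul_left, Complex.conj_ofReal]
    rw [Complex.re_ofReal_mul]
  have hns : ∀ (s : ℝ) (ξ : EuclideanSpace ℂ (Fin d)), ‖(s : ℂ) • ξ‖ = |s| * ‖ξ‖ := by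
    intro s ξ
    rw [norm_smul, Complex.norm_real, Real.norm_eq_abs]
  -- μ ≤ K
  have hKμ : μ ≤ K := by
    by_contra h
    push_neg at h
    set e : EuclideanSpace ℂ (Fin d) := EuclideanSpace.single ⟨0, hd⟩ (1 : ℂ) with he
    have hne : ‖e‖ = 1 := by rw [he, EuclideanSpace.norm_single]; simp
    have hμK : 0 < μ - K := by linarith
    have hμKne : μ - K ≠ 0 := ne_of_gt hμK
    set s : ℝ := Real.sqrt ((1 - μ) * V / (μ - K)) with hs
    have hs0 : 0 ≤ s := Real.sqrt_nonneg _
    have hs2 : (μ - K) * s ^ 2 = (1 - μ) * V := by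
      rw [hs, Real.sq_sqrt (div_nonneg (mul_nonneg (by linarith) hV) (le_of_lt hμK))]
      field_simp
    set t : ℝ := s + 1 with ht
    have htpos : 0 < t := by linarith
    have h1 := lemA ((t : ℂ) • e)
    have h2 := lemA (((-t : ℝ) : ℂ) • e)
    rw [hre, hns, hne] at h1 h2
    rw [abs_neg] at h2
    rw [abs_of_pos htpos] at h1 h2
    simp only [mul_one] at h1 h2
    have hts : t ^ 2 = s ^ 2 + 2 * s + 1 := by rw [ht]; ring
    nlinarith [h1, h2, hs2, hts, mul_pos hμK (show (0:ℝ) < 2 * s + 1 by linarith)]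
  -- the quadratic inequality
  have hquad : ∀ t : ℝ, 0 ≤ (K - μ) * (t * t) + (-‖w‖) * t + (1 - μ) * V := by
    intro t
    rcases le_or_gt t 0 with ht | ht
    · nlinarith [norm_nonneg w, mul_self_nonneg t]
    · by_cases hw0 : w = 0
      · rw [hw0]
        simp only [norm_zero]
        nlinarith [mul_self_nonneg t]
      · have hwn : 0 < ‖w‖ := norm_pos_iff.mpr hw0
        have h1 := lemA (((-(t / ‖w‖) : ℝ) : ℂ) • w)
        rw [hre, hns] at h1
        have habs : |(-(t / ‖w‖))| = t / ‖w‖ := by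
          rw [abs_neg, abs_of_pos (by positivity)]
        rw [habs] at h1
        have hnorm : t / ‖w‖ * ‖w‖ = t := div_mul_cancel₀ t (ne_of_gt hwn)
        rw [hnorm] at h1
        have hww : (hip w w).re = ‖w‖ ^ 2 := @inner_self_eq_norm_sq ℂ _ _ _ _ w
        rw [hww] at h1
        have : -(t / ‖w‖) * ‖w‖ ^ 2 = -(t * ‖w‖) := by
          field_simp
        rw [this] at h1
        nlinarith [h1]
  have hdis := discrim_le_zero hquad
  rw [discrim] at hdis
  have : ‖w‖ ^ 2 ≤ 4 * (1 - μ) * (K - μ) * V := by nlinarith [hdis]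
  rw [hK] at this
  calc ‖b + Jmap p c‖ ^ 2 = ‖w‖ ^ 2 := by rw [hw]
    _ ≤ 4 * (1 - μ) * ((pstar - 1) * Λ - μ) * V := by linarith
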